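/- Let V_a and V_b be real vector spaces, let n_a, n_b ≥ 0, let ω_a be a nonzero nondegenerate alternating (n_a+1)-form on V_a and ω_b a nonzero nondegenerate alternating (n_b+1)-form on V_b. Then the alternating (n_a+n_b+2)-form ω := (pr_a^*ω_a) ∧ (pr_b^*ω_b) on V_a × V_b is nondegenerate: for every v ∈ V_a × V_b, if ι_v ω = 0 then v = 0. (This is the pointwise linear-algebra content of the paper's claim that the product of two multisymplectic manifolds, endowed with the wedge product of the multisymplectic forms, is again multisymplectic.) -/

import Mathlib

/-- A `(p,q)`-shuffle: a permutation of `Fin (p+q)` that is increasing on the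
first block of size `p` and on the last block of size `q`. -/
def IsShuffle (p q : ℕ) (σ : Equiv.Perm (Fin (p + q))) : Prop :=
  (∀ i j : Fin p, i < j → σ (Fin.castAdd q i) < σ (Fin.castAdd q j)) ∧
  (∀ i j : Fin q, i < j → σ (Fin.natAdd p i) < σ (Fin.natAdd p j))

open Classical in
/-- The wedge product of a `p`-form and a `q`-form (given as functions on tuples),
defined by the sum over `(p,q)`-shuffles of the context. -/
noncomputable def wedgeFun {V : Type*} {p q : ℕ}
    (α : (Fin p → V) → ℝ) (β : (Fin q → V) → ℝ) :
    (Fin (p + q) → V) → ℝ := fun v =>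
  ∑ σ : Equiv.Perm (Fin (p + q)),
    if IsShuffle p q σ then
      ((Equiv.Perm.sign σ : ℤ) : ℝ) *
        (α (fun i => v (σ (Fin.castAdd q i))) * β (fun j => v (σ (Fin.natAdd p j))))
    else 0

set_option maxHeartbeats 1000000

lemma sm_add {p N : ℕ} (f : Fin p → Fin N)
    (hf : ∀ i j : Fin p, i < j → f i < f j) :
    ∀ d : ℕ, ∀ i j : Fin p, (i : ℕ) + d = (j : ℕ) → (f i : ℕ) + d ≤ (f j : ℕ) := by
  intro d
  induction d with
  | zero =>
    intro i j h
    have : i = j := Fin.ext (by omega)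
    simp [this]
  | succ d ih =>
    intro i j h
    have hj' : (i : ℕ) + d < p := by omega
    set j' : Fin p := ⟨(i : ℕ) + d, hj'⟩ with hj'def
    have h1 : (f i : ℕ) + d ≤ (f j' : ℕ) := ih i j' rfl
    have h2 : f j' < f j := hf j' j (by rw [Fin.lt_def]; simp [hj'def]; omega)
    rw [Fin.lt_def] at h2
    omega

/-- The wedge product `(pr_a^*ω_a) ∧ (pr_b^*ω_b)` of nonzero nondegenerate alternating
forms `ω_a`, `ω_b` is a nondegenerate alternating form on `V_a × V_b`. -/
theorem product_of_multisymplectic_is_nondegenerate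
    {Va Vb : Type*} [AddCommGroup Va] [Module ℝ Va] [AddCommGroup Vb] [Module ℝ Vb]
    (na nb : ℕ)
    (ωa : AlternatingMap ℝ Va ℝ (Fin (na + 1)))
    (ωb : AlternatingMap ℝ Vb ℝ (Fin (nb + 1)))
    (hωa0 : ωa ≠ 0) (hωb0 : ωb ≠ 0)
    (hωa : ∀ v : Va, (∀ u : Fin na → Va, ωa (Fin.cons v u) = 0) → v = 0)
    (hωb : ∀ v : Vb, (∀ u : Fin nb → Vb, ωb (Fin.cons v u) = 0) → v = 0) :
    ∀ v : Va × Vb,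
      (∀ u : Fin (na + 1 + nb) → Va × Vb,
        wedgeFun (fun w : Fin (na + 1) → Va × Vb => ωa fun i => (w i).1)
                 (fun w : Fin (nb + 1) → Va × Vb => ωb fun j => (w j).2)
          (fun i => (Fin.cons v u : Fin (na + 1 + nb + 1) → Va × Vb)
            (Fin.cast (show na + 1 + (nb + 1) = na + 1 + nb + 1 by omega) i)) = 0) →
      v = 0 := by
  classical
  intro v hv
  obtain ⟨w, hw⟩ : ∃ w : Fin (nb + 1) → Vb, ωb w ≠ 0 := by
    by_contra h
    push_neg at h
    exact hωb0 (AlternatingMap.ext (by simpa using h))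
  obtain ⟨z, hz⟩ : ∃ z : Fin (na + 1) → Va, ωa z ≠ 0 := by
    by_contra h
    push_neg at h
    exact hωa0 (AlternatingMap.ext (by simpa using h))
  have hva : v.1 = 0 := by
    apply hωa
    intro u₀
    set u : Fin (na + 1 + nb) → Va × Vb := fun j =>
      if h : (j : ℕ) < na then (u₀ ⟨j, h⟩, (0 : Vb))
      else ((0 : Va), w ⟨(j : ℕ) - na, by omega⟩) with hu
    set V : Fin (na + 1 + (nb + 1)) → Va × Vb := fun i =>
      (Fin.cons v u : Fin (na + 1 + nb + 1) → Va × Vb)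
        (Fin.cast (show na + 1 + (nb + 1) = na + 1 + nb + 1 by omega) i) with hVdef
    -- value lemmas
    have hVv : ∀ i : Fin (na + 1 + (nb + 1)), (i : ℕ) = 0 → V i = v := by
      intro i h0
      have hc : Fin.cast (show na + 1 + (nb + 1) = na + 1 + nb + 1 by omega) i = 0 :=
        Fin.ext (by simpa using h0)
      rw [hVdef]
      simp only [hc, Fin.cons_zero]
    have hVu : ∀ i : Fin (na + 1 + (nb + 1)), 1 ≤ (i : ℕ) →
        V i = u ⟨(i : ℕ) - 1, by omega⟩ := by
      intro i h1
      have hc : Fin.cast (show na + 1 + (nb + 1) = na + 1 + nb + 1 by omega) i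
          = Fin.succ ⟨(i : ℕ) - 1, by omega⟩ := Fin.ext (by simp; omega)
      rw [hVdef]
      simp only [hc, Fin.cons_succ]
    have hfst0 : ∀ i : Fin (na + 1 + (nb + 1)), na + 1 ≤ (i : ℕ) → (V i).1 = 0 := by
      intro i h
      rw [hVu i (by omega), hu]
      simp only
      rw [dif_neg (by omega)]
    have hsnd0 : ∀ i : Fin (na + 1 + (nb + 1)), 1 ≤ (i : ℕ) → (i : ℕ) ≤ na → (V i).2 = 0 := by
      intro i h1 h2
      rw [hVu i h1, hu]
      simp only
      rw [dif_pos (by omega)]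
    have hVw : ∀ i : Fin (na + 1 + (nb + 1)), na + 1 ≤ (i : ℕ) →
        (V i).2 = w ⟨(i : ℕ) - (na + 1), by omega⟩ := by
      intro i h
      rw [hVu i (by omega), hu]
      simp only
      rw [dif_neg (by omega)]
      simp only
      congr 1
      apply Fin.ext
      simp
      omega
    have hVu1 : ∀ i : Fin (na + 1 + (nb + 1)), (h1 : 1 ≤ (i : ℕ)) → (h2 : (i : ℕ) ≤ na) →
        (V i).1 = u₀ ⟨(i : ℕ) - 1, by omega⟩ := by
      intro i h1 h2
      rw [hVu i h1, hu]
      simp only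
      rw [dif_pos (by omega)]
    -- the sum
    have hsum : (∑ σ : Equiv.Perm (Fin (na + 1 + (nb + 1))),
        if IsShuffle (na + 1) (nb + 1) σ then
          ((Equiv.Perm.sign σ : ℤ) : ℝ) *
            (ωa (fun i => (V (σ (Fin.castAdd (nb + 1) i))).1) *
             ωb (fun j => (V (σ (Fin.natAdd (na + 1) j))).2))
        else 0) = 0 := hv u

    have hshuffle1 : IsShuffle (na + 1) (nb + 1) (1 : Equiv.Perm (Fin (na + 1 + (nb + 1)))) := by
      constructor <;> intro i j hij <;>
        simp only [Equiv.Perm.one_apply, Fin.lt_def, Fin.coe_castAdd, Fin.coe_natAdd] at * <;>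
        omega
    have hvan : ∀ σ : Equiv.Perm (Fin (na + 1 + (nb + 1))), σ ≠ 1 →
        (if IsShuffle (na + 1) (nb + 1) σ then
          ((Equiv.Perm.sign σ : ℤ) : ℝ) *
            (ωa (fun i => (V (σ (Fin.castAdd (nb + 1) i))).1) *
             ωb (fun j => (V (σ (Fin.natAdd (na + 1) j))).2))
        else 0) = 0 := by
      intro σ hne
      by_cases hσ : IsShuffle (na + 1) (nb + 1) σ
      swap
      · rw [if_neg hσ]
      rw [if_pos hσ]
      have hA : ωa (fun i => (V (σ (Fin.castAdd (nb + 1) i))).1) = 0 := by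
        by_contra hA
        apply hne
        have hle : ∀ i : Fin (na + 1), (σ (Fin.castAdd (nb + 1) i) : ℕ) ≤ na := by
          intro i
          by_contra hgt
          push_neg at hgt
          exact hA (ωa.map_coord_zero i (hfst0 _ (by omega)))
        have hca : ∀ i : Fin (na + 1), (σ (Fin.castAdd (nb + 1) i) : ℕ) = (i : ℕ) := by
          intro i
          have hlow := sm_add (fun i => σ (Fin.castAdd (nb + 1) i)) hσ.1 (i : ℕ)
            ⟨0, by omega⟩ i (by simp)
          have hhigh := sm_add (fun i => σ (Fin.castAdd (nb + 1) i)) hσ.1 (na - (i : ℕ))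
            i ⟨na, by omega⟩ (by simp; omega)
          have h1 := hle ⟨na, by omega⟩
          omega
        have hna : ∀ j : Fin (nb + 1), (σ (Fin.natAdd (na + 1) j) : ℕ) = na + 1 + (j : ℕ) := by
          have hge : ∀ j : Fin (nb + 1), na + 1 ≤ (σ (Fin.natAdd (na + 1) j) : ℕ) := by
            intro j
            by_contra hlt
            push_neg at hlt
            have heq : σ (Fin.castAdd (nb + 1) ⟨(σ (Fin.natAdd (na + 1) j) : ℕ), by omega⟩)
                = σ (Fin.natAdd (na + 1) j) := Fin.ext (by rw [hca])
            have := σ.injective heq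
            have := congrArg Fin.val this
            simp only [Fin.coe_castAdd, Fin.coe_natAdd] at this
            omega
          intro j
          have hlow := sm_add (fun j => σ (Fin.natAdd (na + 1) j)) hσ.2 (j : ℕ)
            ⟨0, by omega⟩ j (by simp)
          have hhigh := sm_add (fun j => σ (Fin.natAdd (na + 1) j)) hσ.2 (nb - (j : ℕ))
            j ⟨nb, by omega⟩ (by simp; omega)
          have h1 := hge ⟨0, by omega⟩
          have h2 := (σ (Fin.natAdd (na + 1) ⟨nb, by omega⟩)).isLt
          omega
        apply Equiv.ext
        intro k
        refine Fin.addCases (motive := fun k => σ k = (1 : Equiv.Perm (Fin (na + 1 + (nb + 1)))) k) ?_ ?_ k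
        · intro i
          rw [Equiv.Perm.one_apply]
          exact Fin.ext (by rw [hca]; simp)
        · intro j
          rw [Equiv.Perm.one_apply]
          exact Fin.ext (by rw [hna]; simp)
      rw [hA]
      ring
    have hsingle := Finset.sum_eq_single_of_mem (1 : Equiv.Perm (Fin (na + 1 + (nb + 1))))
      (Finset.mem_univ _) (fun b _ hb => hvan b hb)
    rw [hsingle, if_pos hshuffle1] at hsum
    have hBval : (fun j => (V ((1 : Equiv.Perm (Fin (na + 1 + (nb + 1)))) (Fin.natAdd (na + 1) j))).2) = w := by
      funext j
      rw [Equiv.Perm.one_apply, hVw _ (by simp)]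
      congr 1
      apply Fin.ext
      simp
    have hAval : (fun i => (V ((1 : Equiv.Perm (Fin (na + 1 + (nb + 1)))) (Fin.castAdd (nb + 1) i))).1)
        = Fin.cons v.1 u₀ := by
      funext i
      rw [Equiv.Perm.one_apply]
      refine Fin.cases ?_ ?_ i
      · rw [show V (Fin.castAdd (nb + 1) 0) = v from hVv _ (by simp)]
        simp
      · intro m
        rw [hVu1 _ (by simp) (by simp), Fin.cons_succ]
        exact congrArg u₀ (Fin.ext (by simp))
    rw [hAval, hBval, Equiv.Perm.sign_one] at hsum
    simp only [Units.val_one, Int.cast_one, one_mul] at hsum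
    exact (mul_eq_zero.mp hsum).resolve_right hw
  have hvb : v.2 = 0 := by
    apply hωb
    intro w₀
    set u : Fin (na + 1 + nb) → Va × Vb := fun j =>
      if h : (j : ℕ) < na + 1 then (z ⟨j, h⟩, (0 : Vb))
      else ((0 : Va), w₀ ⟨(j : ℕ) - (na + 1), by omega⟩) with hu
    set V : Fin (na + 1 + (nb + 1)) → Va × Vb := fun i =>
      (Fin.cons v u : Fin (na + 1 + nb + 1) → Va × Vb)
        (Fin.cast (show na + 1 + (nb + 1) = na + 1 + nb + 1 by omega) i) with hVdef
    have hVv : ∀ i : Fin (na + 1 + (nb + 1)), (i : ℕ) = 0 → V i = v := by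
      intro i h0
      have hc : Fin.cast (show na + 1 + (nb + 1) = na + 1 + nb + 1 by omega) i = 0 :=
        Fin.ext (by simpa using h0)
      rw [hVdef]
      simp only [hc, Fin.cons_zero]
    have hVu : ∀ i : Fin (na + 1 + (nb + 1)), 1 ≤ (i : ℕ) →
        V i = u ⟨(i : ℕ) - 1, by omega⟩ := by
      intro i h1
      have hc : Fin.cast (show na + 1 + (nb + 1) = na + 1 + nb + 1 by omega) i
          = Fin.succ ⟨(i : ℕ) - 1, by omega⟩ := Fin.ext (by simp; omega)
      rw [hVdef]
      simp only [hc, Fin.cons_succ]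
    have hsnd0 : ∀ i : Fin (na + 1 + (nb + 1)), 1 ≤ (i : ℕ) → (i : ℕ) ≤ na + 1 →
        (V i).2 = 0 := by
      intro i h1 h2
      rw [hVu i h1, hu]
      simp only
      rw [dif_pos (by omega)]
    have hVz : ∀ i : Fin (na + 1 + (nb + 1)), (h1 : 1 ≤ (i : ℕ)) → (h2 : (i : ℕ) ≤ na + 1) →
        (V i).1 = z ⟨(i : ℕ) - 1, by omega⟩ := by
      intro i h1 h2
      rw [hVu i h1, hu]
      simp only
      rw [dif_pos (by omega)]
    have hVw0 : ∀ i : Fin (na + 1 + (nb + 1)), (h : na + 2 ≤ (i : ℕ)) →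
        (V i).2 = w₀ ⟨(i : ℕ) - (na + 2), by omega⟩ := by
      intro i h
      rw [hVu i (by omega), hu]
      simp only
      rw [dif_neg (by omega)]
      simp only
      congr 1
      apply Fin.ext
      show ((i : ℕ) - 1) - (na + 1) = (i : ℕ) - (na + 2)
      omega
    -- the special shuffle
    have hN : na + 1 + nb + 1 = na + 1 + (nb + 1) := by omega
    set σ₀ : Equiv.Perm (Fin (na + 1 + (nb + 1))) :=
      (finCongr hN).permCongr (Fin.cycleRange ⟨na + 1, by omega⟩) with hσ₀
    have hσ₀lt : ∀ k : Fin (na + 1 + (nb + 1)), (k : ℕ) ≤ na → (σ₀ k : ℕ) = (k : ℕ) + 1 := by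
      intro k hk
      rw [hσ₀, Equiv.permCongr_apply]
      simp only [finCongr_symm, finCongr_apply, Fin.coe_cast]
      rw [Fin.coe_cycleRange_of_lt
        (by rw [Fin.lt_def]; show (k : ℕ) < na + 1; omega)]
      simp only [Fin.coe_cast]
    have hσ₀na1 : ∀ k : Fin (na + 1 + (nb + 1)), (k : ℕ) = na + 1 → (σ₀ k : ℕ) = 0 := by
      intro k hk
      rw [hσ₀, Equiv.permCongr_apply]
      simp only [finCongr_symm, finCongr_apply, Fin.coe_cast]
      rw [show Fin.cast hN.symm k = (⟨na + 1, by omega⟩ : Fin (na + 1 + nb + 1)) from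
        Fin.ext (by show (k : ℕ) = na + 1; omega)]
      rw [Fin.cycleRange_self]
      simp
    have hσ₀gt : ∀ k : Fin (na + 1 + (nb + 1)), na + 2 ≤ (k : ℕ) → σ₀ k = k := by
      intro k hk
      apply Fin.ext
      rw [hσ₀, Equiv.permCongr_apply]
      simp only [finCongr_symm, finCongr_apply, Fin.coe_cast]
      rw [Fin.cycleRange_of_gt
        (by rw [Fin.lt_def]; show na + 1 < (k : ℕ); omega)]
      simp only [Fin.coe_cast]
    have hshuffle0 : IsShuffle (na + 1) (nb + 1) σ₀ := by
      constructor
      · intro i j hij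
        rw [Fin.lt_def] at hij ⊢
        rw [hσ₀lt _ (by simp; omega), hσ₀lt _ (by simp; omega)]
        simp only [Fin.coe_castAdd]
        omega
      · intro i j hij
        rw [Fin.lt_def] at hij ⊢
        rcases Nat.eq_zero_or_pos (i : ℕ) with h0 | hpos
        · rw [hσ₀na1 _ (by simp [h0]), hσ₀gt _ (by simp only [Fin.coe_natAdd]; omega)]
          simp only [Fin.coe_natAdd]
          omega
        · rw [hσ₀gt _ (by simp only [Fin.coe_natAdd]; omega),
            hσ₀gt _ (by simp only [Fin.coe_natAdd]; omega)]
          simp only [Fin.coe_natAdd]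
          omega
    have hsum : (∑ σ : Equiv.Perm (Fin (na + 1 + (nb + 1))),
        if IsShuffle (na + 1) (nb + 1) σ then
          ((Equiv.Perm.sign σ : ℤ) : ℝ) *
            (ωa (fun i => (V (σ (Fin.castAdd (nb + 1) i))).1) *
             ωb (fun j => (V (σ (Fin.natAdd (na + 1) j))).2))
        else 0) = 0 := hv u
    have hvan : ∀ σ : Equiv.Perm (Fin (na + 1 + (nb + 1))), σ ≠ σ₀ →
        (if IsShuffle (na + 1) (nb + 1) σ then
          ((Equiv.Perm.sign σ : ℤ) : ℝ) *
            (ωa (fun i => (V (σ (Fin.castAdd (nb + 1) i))).1) *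
             ωb (fun j => (V (σ (Fin.natAdd (na + 1) j))).2))
        else 0) = 0 := by
      intro σ hne
      by_cases hσ : IsShuffle (na + 1) (nb + 1) σ
      swap
      · rw [if_neg hσ]
      rw [if_pos hσ]
      have hB : ωb (fun j => (V (σ (Fin.natAdd (na + 1) j))).2) = 0 := by
        by_contra hB
        apply hne
        have havoid : ∀ j : Fin (nb + 1), (σ (Fin.natAdd (na + 1) j) : ℕ) = 0 ∨
            na + 2 ≤ (σ (Fin.natAdd (na + 1) j) : ℕ) := by
          intro j
          by_contra hmid
          push_neg at hmid
          exact hB (ωb.map_coord_zero j (hsnd0 _ (by omega) (by omega)))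
        have h0 : (σ (Fin.natAdd (na + 1) (⟨0, by omega⟩ : Fin (nb + 1))) : ℕ) = 0 := by
          rcases havoid ⟨0, by omega⟩ with h | h
          · exact h
          · exfalso
            have hlow := sm_add (fun j => σ (Fin.natAdd (na + 1) j)) hσ.2 nb
              ⟨0, by omega⟩ ⟨nb, by omega⟩ (by simp)
            have h2 := (σ (Fin.natAdd (na + 1) ⟨nb, by omega⟩)).isLt
            omega
        have hpos : ∀ j : Fin (nb + 1), 1 ≤ (j : ℕ) →
            na + 2 ≤ (σ (Fin.natAdd (na + 1) j) : ℕ) := by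
          intro j hj
          have hmono := hσ.2 ⟨0, by omega⟩ j (by rw [Fin.lt_def]; show 0 < (j : ℕ); omega)
          rw [Fin.lt_def] at hmono
          rcases havoid j with h | h
          · omega
          · exact h
        have hj : ∀ j : Fin (nb + 1), 1 ≤ (j : ℕ) →
            (σ (Fin.natAdd (na + 1) j) : ℕ) = na + 1 + (j : ℕ) := by
          intro j hjpos
          have h1 := hpos ⟨1, by omega⟩ (by simp)
          have hlow := sm_add (fun j => σ (Fin.natAdd (na + 1) j)) hσ.2 ((j : ℕ) - 1)
            ⟨1, by omega⟩ j (by simp; omega)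
          have hhigh := sm_add (fun j => σ (Fin.natAdd (na + 1) j)) hσ.2 (nb - (j : ℕ))
            j ⟨nb, by omega⟩ (by simp; omega)
          have h2 := (σ (Fin.natAdd (na + 1) ⟨nb, by omega⟩)).isLt
          omega
        have hca : ∀ i : Fin (na + 1), (σ (Fin.castAdd (nb + 1) i) : ℕ) = (i : ℕ) + 1 := by
          have hne0 : ∀ i : Fin (na + 1), (σ (Fin.castAdd (nb + 1) i) : ℕ) ≠ 0 := by
            intro i hi
            have heq : σ (Fin.castAdd (nb + 1) i) = σ (Fin.natAdd (na + 1) ⟨0, by omega⟩) :=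
              Fin.ext (by rw [hi, h0])
            have := congrArg Fin.val (σ.injective heq)
            simp only [Fin.coe_castAdd, Fin.coe_natAdd] at this
            omega
          have hub : ∀ i : Fin (na + 1), (σ (Fin.castAdd (nb + 1) i) : ℕ) ≤ na + 1 := by
            intro i
            by_contra hgt
            push_neg at hgt
            have hlt := (σ (Fin.castAdd (nb + 1) i)).isLt
            have heq : σ (Fin.castAdd (nb + 1) i) = σ (Fin.natAdd (na + 1)
                ⟨(σ (Fin.castAdd (nb + 1) i) : ℕ) - (na + 1), by omega⟩) :=
              Fin.ext (by rw [hj _ (by simp; omega)]; simp; omega)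
            have := congrArg Fin.val (σ.injective heq)
            simp only [Fin.coe_castAdd, Fin.coe_natAdd] at this
            omega
          intro i
          have h1 := hne0 ⟨0, by omega⟩
          have hlow := sm_add (fun i => σ (Fin.castAdd (nb + 1) i)) hσ.1 (i : ℕ)
            ⟨0, by omega⟩ i (by simp)
          have hhigh := sm_add (fun i => σ (Fin.castAdd (nb + 1) i)) hσ.1 (na - (i : ℕ))
            i ⟨na, by omega⟩ (by simp; omega)
          have h2 := hub ⟨na, by omega⟩
          omega
        apply Equiv.ext
        intro k
        refine Fin.addCases (motive := fun k => σ k = σ₀ k) ?_ ?_ k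
        · intro i
          refine Fin.ext ?_
          rw [hca i, hσ₀lt _ (by simp; omega)]
          simp
        · intro j
          rcases Nat.eq_zero_or_pos (j : ℕ) with hj0 | hjpos
          · have hj' : j = ⟨0, by omega⟩ := Fin.ext hj0
            refine Fin.ext ?_
            rw [hj', h0, hσ₀na1 _ (by simp)]
          · refine Fin.ext ?_
            rw [hj j hjpos, hσ₀gt _ (by simp; omega)]
            simp
      rw [hB]
      ring
    have hsingle := Finset.sum_eq_single_of_mem σ₀ (Finset.mem_univ _) (fun b _ hb => hvan b hb)
    rw [hsingle, if_pos hshuffle0] at hsum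
    have hAval : (fun i => (V (σ₀ (Fin.castAdd (nb + 1) i))).1) = z := by
      funext i
      have hval : (σ₀ (Fin.castAdd (nb + 1) i) : ℕ) = (i : ℕ) + 1 :=
        by rw [hσ₀lt _ (by simp; omega)]; simp
      rw [hVz _ (by omega) (by omega)]
      exact congrArg z (Fin.ext (by simp [hval]))
    have hBval : (fun j => (V (σ₀ (Fin.natAdd (na + 1) j))).2) = Fin.cons v.2 w₀ := by
      funext j
      refine Fin.cases ?_ ?_ j
      · rw [show V (σ₀ (Fin.natAdd (na + 1) (0 : Fin (nb + 1)))) = v from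
          hVv _ (hσ₀na1 _ (by simp))]
        simp
      · intro m
        have hge : na + 2 ≤ (Fin.natAdd (na + 1) m.succ : ℕ) := by simp; omega
        rw [hσ₀gt _ hge, hVw0 _ hge, Fin.cons_succ]
        exact congrArg w₀ (Fin.ext (by simp; omega))
    rw [hAval, hBval] at hsum
    have hcoe : ((Equiv.Perm.sign σ₀ : ℤ) : ℝ) ≠ 0 :=
      Int.cast_ne_zero.mpr (Units.ne_zero _)
    rcases mul_eq_zero.mp hsum with h | h
    · exact absurd h hcoe
    · exact (mul_eq_zero.mp h).resolve_left hz
  exact Prod.ext hva hvb
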